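/- Strong duality for the robustness of asymmetry: for every state ρ on ℂ^d there exists a positive semidefinite d×d complex matrix X with E(X) = I and Re Tr[Xρ] = 1 + RoA(ρ). -/

import Mathlib

open Matrix ComplexOrder

noncomputable section

/-- A state (density matrix): positive semidefinite with trace 1. -/
def IsState {d : ℕ} (ρ : Matrix (Fin d) (Fin d) ℂ) : Prop :=
  ρ.PosSemidef ∧ ρ.trace = 1

/-- Group average of a matrix under a unitary representation. -/
def grpAvg {d : ℕ} {G : Type*} [Fintype G] [Group G]
    (U : G →* Matrix.unitaryGroup (Fin d) ℂ) (X : Matrix (Fin d) (Fin d) ℂ) :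
    Matrix (Fin d) (Fin d) ℂ :=
  (Fintype.card G : ℂ)⁻¹ •
    ∑ g : G, (U g : Matrix (Fin d) (Fin d) ℂ) * X * ((U g : Matrix (Fin d) (Fin d) ℂ))ᴴ

/-- The robustness of asymmetry. -/
def RoA {d : ℕ} {G : Type*} [Fintype G] [Group G]
    (U : G →* Matrix.unitaryGroup (Fin d) ℂ) (ρ : Matrix (Fin d) (Fin d) ℂ) : ℝ :=
  sInf { s : ℝ | 0 ≤ s ∧ ∃ σ : Matrix (Fin d) (Fin d) ℂ,
    IsState σ ∧ grpAvg U σ = σ ∧ ((1 + s) • σ - ρ).PosSemidef }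

namespace RoaAux

variable {d : ℕ}

local notation "M" => Matrix (Fin d) (Fin d) ℂ

attribute [local instance] Matrix.normedAddCommGroup Matrix.normedSpace
lemma psd_smul_real {A : M} (hA : A.PosSemidef) {c : ℝ} (hc : 0 ≤ c) :
    (c • A).PosSemidef := by
  have h1 : (c • A) = ((c : ℂ) • A) := by
    ext i j; simp [Complex.real_smul]
  rw [h1]
  refine Matrix.PosSemidef.of_dotProduct_mulVec_nonneg ?_ fun x => ?_
  · unfold Matrix.IsHermitian
    rw [Matrix.conjTranspose_smul, hA.1.eq]
    congr 1
    simp [Complex.ext_iff, hc]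
  · have := hA.dotProduct_mulVec_nonneg x
    rw [Matrix.smul_mulVec, dotProduct_smul]
    exact mul_nonneg (by positivity) this

lemma psd_trace_re_nonneg {A : M} (hA : A.PosSemidef) : 0 ≤ A.trace.re := by
  have h : ∀ i, 0 ≤ (A i i).re := by
    intro i
    have := hA.re_dotProduct_nonneg (Pi.single i 1)
    simpa [dotProduct, Matrix.mulVec, Pi.single_apply, Finset.sum_ite_eq,
      dotProduct_single] using this
  have : A.trace = ∑ i, A i i := rfl
  rw [this, Complex.re_sum]
  exact Finset.sum_nonneg fun i _ => h i

lemma herm_quadform_real {A : M} (hA : A.IsHermitian) (x : Fin d → ℂ) :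
    (starRingEnd ℂ) (dotProduct (star x) (A *ᵥ x)) =
      dotProduct (star x) (A *ᵥ x) := by
  have expand : dotProduct (star x) (A *ᵥ x)
      = ∑ i, ∑ j, (starRingEnd ℂ) (x i) * A i j * x j := by
    simp [dotProduct, Matrix.mulVec, Finset.mul_sum, mul_assoc]
  rw [expand, map_sum]
  rw [Finset.sum_comm]
  refine Finset.sum_congr rfl fun i _ => ?_
  rw [map_sum]
  refine Finset.sum_congr rfl fun j _ => ?_
  have hji : (starRingEnd ℂ) (A i j) = A j i := by
    have := congrFun (congrFun hA.eq j) i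
    simpa [Matrix.conjTranspose_apply] using this
  simp only [_root_.map_mul]
  rw [Complex.conj_conj, hji]
  ring

lemma psd_of_herm_re {A : M} (hA : A.IsHermitian)
    (h : ∀ x : Fin d → ℂ, 0 ≤ (dotProduct (star x) (A *ᵥ x)).re) :
    A.PosSemidef := by
  refine Matrix.PosSemidef.of_dotProduct_mulVec_nonneg hA fun x => ?_
  rw [Complex.le_def]
  refine ⟨by simpa using h x, ?_⟩
  have := herm_quadform_real hA x
  rw [Complex.conj_eq_iff_im] at this
  simpa using this.symm

/-- outer product x x† -/
def outer (x : Fin d → ℂ) : Matrix (Fin d) (Fin d) ℂ :=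
  Matrix.vecMulVec x (star x)

lemma outer_psd (x : Fin d → ℂ) : (outer x).PosSemidef := by
  refine Matrix.PosSemidef.of_dotProduct_mulVec_nonneg ?_ fun y => ?_
  · ext i j
    simp [outer, Matrix.vecMulVec, Matrix.conjTranspose_apply, mul_comm]
  · have : dotProduct (star y) ((outer x) *ᵥ y)
        = (∑ i, (starRingEnd ℂ) (y i) * x i) * (∑ j, (starRingEnd ℂ) (x j) * y j) := by
      simp [outer, dotProduct, Matrix.mulVec, Matrix.vecMulVec, Finset.mul_sum,
        Finset.sum_mul, mul_assoc, mul_comm, mul_left_comm]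
      ring_nf
      rw [Finset.sum_comm]
    rw [this]
    have hstar : (∑ j, (starRingEnd ℂ) (x j) * y j)
        = star (∑ i, (starRingEnd ℂ) (y i) * x i) := by
      rw [star_sum]
      refine Finset.sum_congr rfl fun i _ => ?_
      simp [mul_comm]
    rw [hstar]
    exact mul_star_self_nonneg _

lemma trace_mul_outer (A : M) (x : Fin d → ℂ) :
    (A * outer x).trace = dotProduct (star x) (A *ᵥ x) := by
  simp only [Matrix.trace, Matrix.diag, Matrix.mul_apply, outer, Matrix.vecMulVec_apply,
    dotProduct, Matrix.mulVec, Pi.star_apply]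
  refine Finset.sum_congr rfl fun j _ => ?_
  rw [Finset.mul_sum]
  refine Finset.sum_congr rfl fun i _ => ?_
  ring

lemma herm_trace_real {A : M} (hA : A.IsHermitian) : A.trace = (A.trace.re : ℂ) := by
  have h : star A.trace = A.trace := by
    rw [← Matrix.trace_conjTranspose, hA.eq]
  exact (Complex.conj_eq_iff_re.mp h).symm

lemma trace_conjTranspose_mul_self_re (S : M) :
    (Sᴴ * S).trace.re = ∑ i, ∑ j, Complex.normSq (S i j) := by
  simp only [Matrix.trace, Matrix.diag, Matrix.mul_apply, Matrix.conjTranspose_apply]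
  rw [Complex.re_sum]
  rw [Finset.sum_comm]
  refine Finset.sum_congr rfl fun i _ => ?_
  rw [Complex.re_sum]
  refine Finset.sum_congr rfl fun j _ => ?_
  simp [Complex.star_def, ← Complex.normSq_eq_conj_mul_self]

lemma eq_zero_of_trace_sq_herm {S : M} (hS : S.IsHermitian)
    (h : (S * S).trace.re = 0) : S = 0 := by
  have h2 : (Sᴴ * S).trace.re = 0 := by rw [hS.eq]; exact h
  rw [trace_conjTranspose_mul_self_re] at h2
  ext i j
  have hij : Complex.normSq (S i j) = 0 := by
    have hnn : ∀ i ∈ Finset.univ, (0:ℝ) ≤ ∑ j, Complex.normSq (S i j) :=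
      fun i _ => Finset.sum_nonneg fun j _ => Complex.normSq_nonneg _
    have h3 := (Finset.sum_eq_zero_iff_of_nonneg hnn).mp h2 i (Finset.mem_univ i)
    have hnn2 : ∀ j ∈ Finset.univ, (0:ℝ) ≤ Complex.normSq (S i j) :=
      fun j _ => Complex.normSq_nonneg _
    exact (Finset.sum_eq_zero_iff_of_nonneg hnn2).mp h3 j (Finset.mem_univ j)
  simpa using Complex.normSq_eq_zero.mp hij

lemma psd_sum {ι : Type*} (s : Finset ι) (F : ι → M)
    (h : ∀ i ∈ s, (F i).PosSemidef) : (∑ i ∈ s, F i).PosSemidef := by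
  classical
  induction s using Finset.induction with
  | empty => simpa using Matrix.PosSemidef.zero
  | insert _ _ hx ih =>
    rw [Finset.sum_insert hx]
    exact Matrix.PosSemidef.add (h _ (Finset.mem_insert_self _ _))
      (ih fun i hi => h i (Finset.mem_insert_of_mem hi))

lemma quadform_re_le (A : M) (x : Fin d → ℂ) :
    (dotProduct (star x) (A *ᵥ x)).re ≤ (d * ‖A‖) * ∑ i, Complex.normSq (x i) := by
  have h1 : (dotProduct (star x) (A *ᵥ x)).re
      ≤ ‖dotProduct (star x) (A *ᵥ x)‖ := Complex.re_le_norm _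
  refine h1.trans ?_
  have h2 : ‖dotProduct (star x) (A *ᵥ x)‖
      ≤ ∑ i, ∑ j, ‖x i‖ * (‖A‖ * ‖x j‖) := by
    have expand : dotProduct (star x) (A *ᵥ x)
        = ∑ i, ∑ j, (starRingEnd ℂ) (x i) * A i j * x j := by
      simp [dotProduct, Matrix.mulVec, Finset.mul_sum, mul_assoc]
    rw [expand]
    refine (norm_sum_le _ _).trans ?_
    refine Finset.sum_le_sum fun i _ => ?_
    refine (norm_sum_le _ _).trans ?_
    refine Finset.sum_le_sum fun j _ => ?_
    rw [norm_mul, norm_mul]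
    simp only [Complex.norm_conj]
    rw [mul_assoc]
    refine mul_le_mul_of_nonneg_left ?_ (norm_nonneg _)
    exact mul_le_mul_of_nonneg_right (Matrix.norm_entry_le_entrywise_sup_norm A)
      (norm_nonneg _)
  refine h2.trans ?_
  have h3 : ∑ i, ∑ j, ‖x i‖ * (‖A‖ * ‖x j‖)
      = ‖A‖ * (∑ i, ‖x i‖) ^ 2 := by
    rw [sq, Finset.sum_mul_sum, Finset.mul_sum]
    refine Finset.sum_congr rfl fun i _ => ?_
    rw [Finset.mul_sum]
    refine Finset.sum_congr rfl fun j _ => ?_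
    ring
  rw [h3]
  have h4 : (∑ i, ‖x i‖) ^ 2 ≤ (d : ℝ) * ∑ i, ‖x i‖ ^ 2 := by
    simpa using sq_sum_le_card_mul_sum_sq (s := (Finset.univ : Finset (Fin d)))
      (f := fun i => ‖x i‖)
  have h5 : ∑ i, ‖x i‖ ^ 2 = ∑ i, Complex.normSq (x i) := by
    refine Finset.sum_congr rfl fun i _ => ?_
    rw [Complex.sq_norm]
  calc ‖A‖ * (∑ i, ‖x i‖) ^ 2
      ≤ ‖A‖ * ((d : ℝ) * ∑ i, Complex.normSq (x i)) := by
        refine mul_le_mul_of_nonneg_left ?_ (norm_nonneg _)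
        rw [← h5]; exact h4
    _ = (d * ‖A‖) * ∑ i, Complex.normSq (x i) := by ring


lemma herm_smul_one_real (c : ℝ) : ((c • (1:M)) : M).IsHermitian := by
  ext i j
  simp [Matrix.conjTranspose_apply, Matrix.one_apply, Complex.ext_iff]
  aesop

lemma dotProduct_self_re (x : Fin d → ℂ) :
    (dotProduct (star x) x).re = ∑ i, Complex.normSq (x i) := by
  simp only [dotProduct, Pi.star_apply, Complex.re_sum]
  refine Finset.sum_congr rfl fun i _ => ?_
  simp [Complex.star_def, ← Complex.normSq_eq_conj_mul_self]

lemma herm_dominated {A : M} (hA : A.IsHermitian) :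
    ((((d:ℝ) * ‖A‖) • (1 : M)) - A).PosSemidef := by
  have hherm : ((((d:ℝ) * ‖A‖) • (1 : M)) - A).IsHermitian :=
    (herm_smul_one_real _).sub hA
  refine psd_of_herm_re hherm fun x => ?_
  · have hexp : dotProduct (star x) (((((d:ℝ) * ‖A‖) • (1 : M)) - A) *ᵥ x)
        = ((d:ℝ) * ‖A‖) • (dotProduct (star x) x)
          - dotProduct (star x) (A *ᵥ x) := by
      rw [Matrix.sub_mulVec, dotProduct_sub]
      congr 1
      rw [Matrix.smul_mulVec, Matrix.one_mulVec, dotProduct_smul]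
    rw [hexp]
    rw [Complex.sub_re, Complex.smul_re]
    rw [dotProduct_self_re]
    simp only [smul_eq_mul]
    have := quadform_re_le A x
    linarith


set_option linter.unusedSectionVars false

variable {G : Type*} [Fintype G] [Group G]

variable (U : G →* Matrix.unitaryGroup (Fin d) ℂ)

lemma card_ne_zero' : (Fintype.card G : ℂ) ≠ 0 := by
  simp [Fintype.card_ne_zero]

lemma grpAvg_add (X Y : M) : grpAvg U (X + Y) = grpAvg U X + grpAvg U Y := by
  unfold grpAvg
  rw [← smul_add, ← Finset.sum_add_distrib]
  congr 1
  refine Finset.sum_congr rfl fun g _ => ?_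
  rw [Matrix.mul_add, Matrix.add_mul]

lemma grpAvg_csmul (c : ℂ) (X : M) : grpAvg U (c • X) = c • grpAvg U X := by
  unfold grpAvg
  rw [smul_comm]
  congr 1
  rw [Finset.smul_sum]
  refine Finset.sum_congr rfl fun g _ => ?_
  rw [Matrix.mul_smul, Matrix.smul_mul]

lemma grpAvg_rsmul (c : ℝ) (X : M) : grpAvg U (c • X) = c • grpAvg U X := by
  have h1 : (c • X) = ((c:ℂ) • X) := by ext i j; simp [Complex.real_smul]
  have h2 : (c • grpAvg U X) = ((c:ℂ) • grpAvg U X) := by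
    ext i j; simp [Complex.real_smul]
  rw [h1, h2, grpAvg_csmul]

lemma grpAvg_sub (X Y : M) : grpAvg U (X - Y) = grpAvg U X - grpAvg U Y := by
  have := grpAvg_add U (X - Y) Y
  rw [sub_add_cancel] at this
  rw [this]; abel

lemma grpAvg_one : grpAvg U (1 : M) = 1 := by
  unfold grpAvg
  have h : ∀ g : G, (U g : Matrix (Fin d) (Fin d) ℂ) * 1 * ((U g : Matrix (Fin d) (Fin d) ℂ))ᴴ
      = (1 : M) := by
    intro g
    rw [Matrix.mul_one, ← Matrix.star_eq_conjTranspose]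
    exact (Matrix.mem_unitaryGroup_iff.mp (U g).2)
  rw [Finset.sum_congr rfl fun g _ => h g]
  rw [Finset.sum_const, Finset.card_univ, ← Nat.cast_smul_eq_nsmul ℂ]
  rw [smul_smul, inv_mul_cancel₀ (card_ne_zero' (G := G)), one_smul]

lemma coe_inv_eq (g : G) :
    ((U g : Matrix (Fin d) (Fin d) ℂ))ᴴ = (U g⁻¹ : Matrix (Fin d) (Fin d) ℂ) := by
  rw [← Matrix.star_eq_conjTranspose, map_inv]
  exact (Matrix.UnitaryGroup.inv_val (U g)).symm

lemma grpAvg_conj_invariant (X : M) (h : G) :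
    (U h : Matrix (Fin d) (Fin d) ℂ) * grpAvg U X * ((U h : Matrix (Fin d) (Fin d) ℂ))ᴴ
      = grpAvg U X := by
  unfold grpAvg
  rw [Matrix.mul_smul, Matrix.smul_mul]
  congr 1
  rw [Matrix.mul_sum, Matrix.sum_mul]
  refine Fintype.sum_equiv (Equiv.mulLeft h) _ _ fun g => ?_
  simp only [Equiv.coe_mulLeft]
  have hmul : (U (h * g) : Matrix (Fin d) (Fin d) ℂ)
      = (U h : Matrix (Fin d) (Fin d) ℂ) * (U g : Matrix (Fin d) (Fin d) ℂ) := by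
    rw [_root_.map_mul]; rfl
  rw [hmul, Matrix.conjTranspose_mul]
  simp only [Matrix.mul_assoc]

lemma grpAvg_idem (X : M) : grpAvg U (grpAvg U X) = grpAvg U X := by
  conv_lhs => rw [grpAvg]
  rw [Finset.sum_congr rfl fun g _ => grpAvg_conj_invariant U X g]
  rw [Finset.sum_const, Finset.card_univ, ← Nat.cast_smul_eq_nsmul ℂ]
  rw [smul_smul, inv_mul_cancel₀ (card_ne_zero' (G := G)), one_smul]

lemma grpAvg_psd {X : M} (hX : X.PosSemidef) : (grpAvg U X).PosSemidef := by
  have h1 : grpAvg U X = ((Fintype.card G : ℝ)⁻¹ : ℝ) •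
      ∑ g : G, (U g : Matrix (Fin d) (Fin d) ℂ) * X * ((U g : Matrix (Fin d) (Fin d) ℂ))ᴴ := by
    unfold grpAvg
    ext i j
    simp [Complex.real_smul]
  rw [h1]
  refine psd_smul_real ?_ (by positivity)
  exact psd_sum _ _ fun g _ => hX.mul_mul_conjTranspose_same _

lemma grpAvg_herm {X : M} (hX : X.IsHermitian) : (grpAvg U X).IsHermitian := by
  unfold grpAvg
  unfold Matrix.IsHermitian
  rw [Matrix.conjTranspose_smul, Matrix.conjTranspose_sum]
  have hc : star ((Fintype.card G : ℂ)⁻¹) = (Fintype.card G : ℂ)⁻¹ := by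
    simp [star_inv₀]
  rw [hc]
  congr 1
  refine Finset.sum_congr rfl fun g _ => ?_
  rw [Matrix.conjTranspose_mul, Matrix.conjTranspose_mul, Matrix.conjTranspose_conjTranspose,
    hX.eq, Matrix.mul_assoc]

lemma grpAvg_adjoint (A B : M) :
    ((grpAvg U A) * B).trace = (A * grpAvg U B).trace := by
  unfold grpAvg
  rw [Matrix.smul_mul, Matrix.mul_smul, Matrix.trace_smul, Matrix.trace_smul]
  congr 1
  rw [Matrix.sum_mul, Matrix.mul_sum, Matrix.trace_sum, Matrix.trace_sum]
  refine Fintype.sum_equiv (Equiv.inv G) _ _ fun g => ?_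
  simp only [Equiv.inv_apply]
  rw [← coe_inv_eq U g]
  have h1 : ((U g : Matrix (Fin d) (Fin d) ℂ))ᴴᴴ = (U g : Matrix (Fin d) (Fin d) ℂ) :=
    Matrix.conjTranspose_conjTranspose _
  rw [h1]
  rw [show ((U g : Matrix (Fin d) (Fin d) ℂ)) * A * ((U g : Matrix (Fin d) (Fin d) ℂ))ᴴ * B
      = ((U g : Matrix (Fin d) (Fin d) ℂ)) * (A * (((U g : Matrix (Fin d) (Fin d) ℂ))ᴴ * B))
      from by simp only [Matrix.mul_assoc]]
  rw [Matrix.trace_mul_comm]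
  simp only [Matrix.mul_assoc]


lemma grpAvg_zero : grpAvg U (0 : M) = 0 := by
  have := grpAvg_sub U (0:M) 0
  simpa using this

/-- Feasible trace values for the shifted primal problem. -/
def feas (ρ S : M) : Set ℝ :=
  {r | ∃ τ : M, grpAvg U τ = τ ∧ (τ - ρ - S).PosSemidef ∧ τ.trace.re = r}

/-- Primal value function. -/
def vv (ρ S : M) : ℝ := sInf (feas U ρ S)

lemma feas_lb {ρ : M} (hρ : IsState ρ) {S : M} {r : ℝ} (hr : r ∈ feas U ρ S) :
    1 + S.trace.re ≤ r := by
  obtain ⟨τ, _, hpsd, htr⟩ := hr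
  have h0 := psd_trace_re_nonneg hpsd
  rw [Matrix.trace_sub, Matrix.trace_sub] at h0
  simp only [Complex.sub_re] at h0
  have hρtr : ρ.trace.re = 1 := by rw [hρ.2]; simp
  rw [hρtr] at h0
  rw [← htr]; linarith

lemma feas_bdd {ρ : M} (hρ : IsState ρ) (S : M) : BddBelow (feas U ρ S) :=
  ⟨1 + S.trace.re, fun _ hr => feas_lb U hρ hr⟩

lemma feas_nonempty {ρ : M} (hρ : IsState ρ) {S : M} (hS : S.IsHermitian) :
    (feas U ρ S).Nonempty := by
  classical
  set τ : M := (Fintype.card G : ℝ) • grpAvg U ρ + ((d : ℝ) * ‖S‖) • 1 with hτ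
  refine ⟨τ.trace.re, τ, ?_, ?_, rfl⟩
  · rw [hτ, grpAvg_add, grpAvg_rsmul, grpAvg_rsmul, grpAvg_idem, grpAvg_one]
  · have hsplit : τ - ρ - S
        = ((Fintype.card G : ℝ) • grpAvg U ρ - ρ) + (((d : ℝ) * ‖S‖) • (1:M) - S) := by
      rw [hτ]; abel
    rw [hsplit]
    refine Matrix.PosSemidef.add ?_ (herm_dominated hS)
    have hexp : (Fintype.card G : ℝ) • grpAvg U ρ
        = ∑ g : G, (U g : Matrix (Fin d) (Fin d) ℂ) * ρ * ((U g : Matrix (Fin d) (Fin d) ℂ))ᴴ := by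
      unfold grpAvg
      have hre : (Fintype.card G : ℝ) • ((Fintype.card G : ℂ)⁻¹ •
          ∑ g : G, (U g : Matrix (Fin d) (Fin d) ℂ) * ρ * ((U g : Matrix (Fin d) (Fin d) ℂ))ᴴ)
          = ((Fintype.card G : ℂ)) • ((Fintype.card G : ℂ)⁻¹ •
          ∑ g : G, (U g : Matrix (Fin d) (Fin d) ℂ) * ρ * ((U g : Matrix (Fin d) (Fin d) ℂ))ᴴ) := by
        ext i j
        simp [Complex.real_smul]
      rw [hre, smul_smul, mul_inv_cancel₀ (card_ne_zero' (G := G)), one_smul]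
    rw [hexp]
    have herase : (∑ g : G, (U g : Matrix (Fin d) (Fin d) ℂ) * ρ * ((U g : Matrix (Fin d) (Fin d) ℂ))ᴴ) - ρ
        = ∑ g ∈ Finset.univ.erase (1:G),
            (U g : Matrix (Fin d) (Fin d) ℂ) * ρ * ((U g : Matrix (Fin d) (Fin d) ℂ))ᴴ := by
      rw [← Finset.sum_erase_add Finset.univ _ (Finset.mem_univ (1:G))]
      have hone : (U 1 : Matrix (Fin d) (Fin d) ℂ) * ρ * ((U 1 : Matrix (Fin d) (Fin d) ℂ))ᴴ = ρ := by
        rw [_root_.map_one]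
        simp
      rw [hone]
      abel
    rw [herase]
    exact psd_sum _ _ fun g _ => hρ.1.mul_mul_conjTranspose_same _

lemma vv_le_of {ρ : M} (hρ : IsState ρ) {S S' : M} (hS : S.IsHermitian) {a b : ℝ}
    (ha : 0 ≤ a)
    (h : ∀ r ∈ feas U ρ S, a * r + b ∈ feas U ρ S') :
    vv U ρ S' ≤ a * vv U ρ S + b := by
  have h2 : ∀ r ∈ feas U ρ S, vv U ρ S' ≤ a * r + b := fun r hr =>
    csInf_le (feas_bdd U hρ S') (h r hr)
  rcases eq_or_lt_of_le ha with heq | hlt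
  · obtain ⟨r0, hr0⟩ := feas_nonempty U hρ hS
    have := h2 r0 hr0
    rw [← heq] at this ⊢
    simpa using this
  · have h3 : ∀ r ∈ feas U ρ S, (vv U ρ S' - b) / a ≤ r := by
      intro r hr
      rw [div_le_iff₀ hlt]
      have := h2 r hr
      linarith [h2 r hr]
    have h4 : (vv U ρ S' - b) / a ≤ vv U ρ S :=
      le_csInf (feas_nonempty U hρ hS) h3
    rw [div_le_iff₀ hlt] at h4
    linarith

lemma vv_shift {ρ : M} (hρ : IsState ρ) {S S' : M} (hS : S.IsHermitian)
    (hS' : S'.IsHermitian) :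
    vv U ρ S' ≤ vv U ρ S + (d : ℝ) * ((d : ℝ) * ‖S' - S‖) := by
  have h := vv_le_of U hρ (S' := S') hS (a := 1) (b := (d : ℝ) * ((d : ℝ) * ‖S' - S‖)) zero_le_one ?_
  · simpa using h
  · rintro r ⟨τ, hE, hpsd, htr⟩
    refine ⟨τ + ((d : ℝ) * ‖S' - S‖) • 1, ?_, ?_, ?_⟩
    · rw [grpAvg_add, hE, grpAvg_rsmul, grpAvg_one]
    · have hsplit : τ + ((d : ℝ) * ‖S' - S‖) • 1 - ρ - S'
          = (τ - ρ - S) + (((d : ℝ) * ‖S' - S‖) • (1:M) - (S' - S)) := by abel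
      rw [hsplit]
      exact Matrix.PosSemidef.add hpsd (herm_dominated (hS'.sub hS))
    · rw [Matrix.trace_add, Matrix.trace_smul, Matrix.trace_one]
      simp only [Complex.add_re, htr, Complex.smul_re]
      push_cast [Fintype.card_fin]
      simp only [smul_eq_mul, Complex.natCast_re]
      ring

lemma vv_lipschitz {ρ : M} (hρ : IsState ρ) {S S' : M} (hS : S.IsHermitian)
    (hS' : S'.IsHermitian) :
    |vv U ρ S' - vv U ρ S| ≤ ((d : ℝ) * (d : ℝ)) * ‖S' - S‖ := by
  rw [abs_le]
  constructor
  · have := vv_shift U hρ hS' hS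
    rw [show S - S' = -(S' - S) from by abel, norm_neg] at this
    nlinarith [this]
  · have := vv_shift U hρ hS hS'
    nlinarith [this]

lemma vv_convex {ρ : M} (hρ : IsState ρ) {A B : M} (hA : A.IsHermitian)
    (hB : B.IsHermitian) {θ η : ℝ} (hθ : 0 ≤ θ) (hη : 0 ≤ η) (hsum : θ + η = 1) :
    vv U ρ (θ • A + η • B) ≤ θ * vv U ρ A + η * vv U ρ B := by
  refine le_of_forall_pos_le_add fun ε hε => ?_
  obtain ⟨ra, hra, hra2⟩ := Real.lt_sInf_add_pos (feas_nonempty U hρ hA) hε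
  obtain ⟨rb, hrb, hrb2⟩ := Real.lt_sInf_add_pos (feas_nonempty U hρ hB) hε
  obtain ⟨τa, hEa, hpa, hta⟩ := hra
  obtain ⟨τb, hEb, hpb, htb⟩ := hrb
  have hmem : θ * ra + η * rb ∈ feas U ρ (θ • A + η • B) := by
    refine ⟨θ • τa + η • τb, ?_, ?_, ?_⟩
    · rw [grpAvg_add, grpAvg_rsmul, grpAvg_rsmul, hEa, hEb]
    · have hsplit : θ • τa + η • τb - ρ - (θ • A + η • B)
          = θ • (τa - ρ - A) + η • (τb - ρ - B) := by
        have hρ1 : ρ = θ • ρ + η • ρ := by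
          rw [← add_smul, hsum, one_smul]
        rw [smul_sub, smul_sub, smul_sub, smul_sub]
        rw [show θ • τa + η • τb - ρ - (θ • A + η • B)
            = θ • τa + η • τb - (θ • ρ + η • ρ) - (θ • A + η • B) from by rw [← hρ1]]
        abel
      rw [hsplit]
      exact Matrix.PosSemidef.add (psd_smul_real hpa hθ) (psd_smul_real hpb hη)
    · rw [Matrix.trace_add, Matrix.trace_smul, Matrix.trace_smul]
      simp only [Complex.add_re, Complex.smul_re, smul_eq_mul, hta, htb]
  have hv := csInf_le (feas_bdd U hρ _) hmem
  have : vv U ρ (θ • A + η • B) ≤ θ * ra + η * rb := hv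
  have hra3 : ra < vv U ρ A + ε := hra2
  have hrb3 : rb < vv U ρ B + ε := hrb2
  nlinarith [mul_le_mul_of_nonneg_left (le_of_lt hra3) hθ,
    mul_le_mul_of_nonneg_left (le_of_lt hrb3) hη]


lemma conjTranspose_rsmul (r : ℝ) (X : M) : (r • X)ᴴ = r • Xᴴ := by
  ext i j
  simp [Matrix.conjTranspose_apply, Complex.real_smul]

/-- Hermitian part of a matrix. -/
def hermPart (S : M) : M := (1/2 : ℝ) • (S + Sᴴ)

lemma hermPart_herm (S : M) : (hermPart S).IsHermitian := by
  unfold hermPart Matrix.IsHermitian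
  rw [conjTranspose_rsmul, Matrix.conjTranspose_add, Matrix.conjTranspose_conjTranspose]
  rw [add_comm]

lemma hermPart_of_herm {S : M} (hS : S.IsHermitian) : hermPart S = S := by
  unfold hermPart
  rw [hS.eq, ← two_smul ℝ S, smul_smul]
  norm_num

lemma hermPart_zero : hermPart (0 : M) = 0 := by
  simp [hermPart]

lemma hermPart_comb (a b : ℝ) (X Y : M) :
    hermPart (a • X + b • Y) = a • hermPart X + b • hermPart Y := by
  unfold hermPart
  rw [Matrix.conjTranspose_add, conjTranspose_rsmul, conjTranspose_rsmul]
  module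

lemma hermPart_sub (X Y : M) : hermPart X - hermPart Y = hermPart (X - Y) := by
  have h1 : X - Y = X + (-1 : ℝ) • Y := by
    rw [neg_one_smul]; abel
  have h2 : X = (1:ℝ) • X := (one_smul ℝ X).symm
  rw [h1]
  rw [show X + (-1:ℝ) • Y = (1:ℝ) • X + (-1:ℝ) • Y from by rw [one_smul]]
  rw [hermPart_comb]
  rw [one_smul, neg_one_smul]
  abel

lemma norm_hermPart_le (S : M) : ‖hermPart S‖ ≤ ‖S‖ := by
  unfold hermPart
  rw [norm_smul]
  have h1 : ‖S + Sᴴ‖ ≤ ‖S‖ + ‖Sᴴ‖ := norm_add_le _ _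
  rw [Matrix.norm_conjTranspose] at h1
  have h2 : ‖(1/2:ℝ)‖ = 1/2 := by rw [Real.norm_eq_abs]; norm_num
  rw [h2]
  linarith

lemma csmul_decomp (z : ℂ) (E : M) : z • E = z.re • E + z.im • (Complex.I • E) := by
  ext a b
  simp only [Matrix.add_apply, Matrix.smul_apply, Complex.real_smul, smul_eq_mul]
  rw [Complex.ext_iff]
  constructor
  · simp [Complex.mul_re, Complex.mul_im]; try ring
  · simp [Complex.mul_re, Complex.mul_im]; try ring

lemma exists_matrix_repr (f : (Matrix (Fin d) (Fin d) ℂ × ℝ) →L[ℝ] ℝ) :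
    ∃ B : Matrix (Fin d) (Fin d) ℂ, ∀ S : Matrix (Fin d) (Fin d) ℂ,
      f (S, 0) = ((B * S).trace).re := by
  classical
  set g0 : Matrix (Fin d) (Fin d) ℂ →ₗ[ℝ] ℝ :=
    (f : (Matrix (Fin d) (Fin d) ℂ × ℝ) →ₗ[ℝ] ℝ).comp (LinearMap.inl ℝ _ ℝ) with hg0
  have hg0app : ∀ S : M, g0 S = f (S, 0) := fun S => rfl
  refine ⟨Matrix.of (fun i j =>
      (g0 (Matrix.single j i 1) : ℂ)
        + (- g0 (Complex.I • Matrix.single j i 1) : ℝ) * Complex.I), fun S => ?_⟩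
  rw [← hg0app]
  -- expand S into standard basis
  conv_lhs => rw [show S = ∑ k : Fin d, ∑ i : Fin d, Matrix.single k i (S k i) from
    Matrix.matrix_eq_sum_single S]
  rw [map_sum]
  -- right side
  have hrhs : (((Matrix.of (fun i j =>
      (g0 (Matrix.single j i 1) : ℂ)
        + (- g0 (Complex.I • Matrix.single j i 1) : ℝ) * Complex.I)) * S).trace).re
      = ∑ i : Fin d, ∑ k : Fin d,
          (((g0 (Matrix.single k i 1) : ℂ)
            + (- g0 (Complex.I • Matrix.single k i 1) : ℝ) * Complex.I) * S k i).re := by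
    unfold Matrix.trace
    rw [Complex.re_sum]
    refine Finset.sum_congr rfl fun i _ => ?_
    rw [Matrix.diag_apply, Matrix.mul_apply, Complex.re_sum]
    rfl
  rw [hrhs, Finset.sum_comm]
  refine Finset.sum_congr rfl fun k _ => ?_
  rw [map_sum]
  refine Finset.sum_congr rfl fun i _ => ?_
  have hterm : Matrix.single k i (S k i) = (S k i) • Matrix.single k i (1:ℂ) := by
    rw [Matrix.smul_single, smul_eq_mul, mul_one]
  rw [hterm, csmul_decomp, map_add, _root_.map_smul, _root_.map_smul]
  simp only [smul_eq_mul]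
  simp only [add_mul, Complex.add_re, Complex.sub_im, Complex.sub_re, Complex.mul_re,
    Complex.mul_im, Complex.ofReal_re, Complex.ofReal_im, Complex.I_re, Complex.I_im,
    Complex.ofReal_neg, Complex.neg_re, Complex.neg_im]
  ring

lemma herm_pairing_re (B : M) {S : M} (hS : S.IsHermitian) :
    (((hermPart B) * S).trace).re = ((B * S).trace).re := by
  unfold hermPart
  rw [Matrix.smul_mul, Matrix.add_mul, Matrix.trace_smul, Matrix.trace_add]
  have hconj : ((Bᴴ * S).trace) = star ((B * S).trace) := by
    conv_lhs => rw [← hS.eq]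
    rw [← Matrix.conjTranspose_mul, Matrix.trace_conjTranspose, Matrix.trace_mul_comm]
  rw [hconj]
  rw [Complex.smul_re, Complex.add_re]
  simp only [Complex.star_def, Complex.conj_re, smul_eq_mul]
  ring


lemma roa_set_eq (ρ : M) :
    RoA U ρ = sInf { s : ℝ | 0 ≤ s ∧ ∃ σ : M,
      IsState σ ∧ grpAvg U σ = σ ∧ ((1 + s) • σ - ρ).PosSemidef } := rfl

lemma feas_to_roa {ρ : M} (hρ : IsState ρ) {r : ℝ} (hr : r ∈ feas U ρ 0) :
    r - 1 ∈ { s : ℝ | 0 ≤ s ∧ ∃ σ : M,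
      IsState σ ∧ grpAvg U σ = σ ∧ ((1 + s) • σ - ρ).PosSemidef } := by
  obtain ⟨τ, hE, hpsd, htr⟩ := hr
  have hr1 : 1 ≤ r := by
    have := feas_lb U hρ ⟨τ, hE, hpsd, htr⟩
    simpa using this
  have hrne : r ≠ 0 := by linarith
  have hτpsd : τ.PosSemidef := by
    have h1 : τ = (τ - ρ - 0) + ρ := by abel
    rw [h1]
    exact Matrix.PosSemidef.add hpsd hρ.1
  have hτtr : τ.trace = (r : ℂ) := by
    rw [herm_trace_real hτpsd.1, htr]
  refine ⟨by linarith, r⁻¹ • τ, ⟨psd_smul_real hτpsd (by positivity), ?_⟩, ?_, ?_⟩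
  · rw [Matrix.trace_smul, hτtr]
    rw [Complex.real_smul]
    push_cast
    field_simp
  · rw [grpAvg_rsmul, hE]
  · have h2 : (1 + (r - 1)) • (r⁻¹ • τ) - ρ = τ - ρ - 0 := by
      rw [smul_smul]
      rw [show (1 + (r - 1)) * r⁻¹ = r * r⁻¹ from by ring]
      rw [mul_inv_cancel₀ hrne, one_smul]
      abel
    rw [h2]
    exact hpsd

lemma roa_to_feas {ρ : M} (hρ : IsState ρ) {s : ℝ}
    (hs : s ∈ { s : ℝ | 0 ≤ s ∧ ∃ σ : M,
      IsState σ ∧ grpAvg U σ = σ ∧ ((1 + s) • σ - ρ).PosSemidef }) :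
    1 + s ∈ feas U ρ 0 := by
  obtain ⟨hs0, σ, hσ, hEσ, hpsd⟩ := hs
  refine ⟨(1 + s) • σ, by rw [grpAvg_rsmul, hEσ], by rw [sub_zero]; exact hpsd, ?_⟩
  rw [Matrix.trace_smul, hσ.2]
  simp [Complex.smul_re]

lemma vv_zero_eq (hρ : IsState (ρ : M)) : vv U ρ 0 = 1 + RoA U ρ := by
  have hTne : (feas U ρ 0).Nonempty := feas_nonempty U hρ Matrix.isHermitian_zero
  obtain ⟨r0, hr0⟩ := id hTne
  have hRne : { s : ℝ | 0 ≤ s ∧ ∃ σ : M,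
      IsState σ ∧ grpAvg U σ = σ ∧ ((1 + s) • σ - ρ).PosSemidef }.Nonempty :=
    ⟨r0 - 1, feas_to_roa U hρ hr0⟩
  have hRbdd : BddBelow { s : ℝ | 0 ≤ s ∧ ∃ σ : M,
      IsState σ ∧ grpAvg U σ = σ ∧ ((1 + s) • σ - ρ).PosSemidef } :=
    ⟨0, fun s hs => hs.1⟩
  rw [roa_set_eq]
  refine le_antisymm ?_ ?_
  · have h1 : ∀ s ∈ { s : ℝ | 0 ≤ s ∧ ∃ σ : M,
        IsState σ ∧ grpAvg U σ = σ ∧ ((1 + s) • σ - ρ).PosSemidef },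
        vv U ρ 0 ≤ 1 + s := fun s hs => csInf_le (feas_bdd U hρ 0) (roa_to_feas U hρ hs)
    have h2 : ∀ s ∈ { s : ℝ | 0 ≤ s ∧ ∃ σ : M,
        IsState σ ∧ grpAvg U σ = σ ∧ ((1 + s) • σ - ρ).PosSemidef },
        vv U ρ 0 - 1 ≤ s := fun s hs => by linarith [h1 s hs]
    have := le_csInf hRne h2
    linarith
  · refine le_csInf hTne fun r hr => ?_
    have := csInf_le hRbdd (feas_to_roa U hρ hr)
    linarith

end RoaAux


section MainTheorem

open RoaAux

attribute [local instance] Matrix.normedAddCommGroup Matrix.normedSpace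

set_option maxHeartbeats 1000000 in
theorem roa_strong_duality {d : ℕ} (hd : 1 ≤ d) {G : Type*} [Fintype G] [Group G]
    (U : G →* Matrix.unitaryGroup (Fin d) ℂ)
    (ρ : Matrix (Fin d) (Fin d) ℂ) (hρ : IsState ρ) :
    ∃ X : Matrix (Fin d) (Fin d) ℂ, X.PosSemidef ∧ grpAvg U X = 1 ∧
      (X * ρ).trace.re = 1 + RoA U ρ := by
  classical
  have hρherm : ρ.IsHermitian := hρ.1.1
  set p := vv U ρ 0 with hp
  set g : Matrix (Fin d) (Fin d) ℂ → ℝ := fun S => vv U ρ (hermPart S) with hgdef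
  have hg0 : g 0 = p := by rw [hgdef]; simp only [hermPart_zero, hp]
  -- continuity of g
  have hgcont : Continuous g := by
    have hlip : LipschitzWith (Real.toNNReal ((d:ℝ)*(d:ℝ))) g := by
      refine LipschitzWith.of_dist_le_mul fun x y => ?_
      rw [Real.dist_eq, dist_eq_norm]
      have h1 := vv_lipschitz U hρ (hermPart_herm y) (hermPart_herm x)
      have h2 : ‖hermPart x - hermPart y‖ ≤ ‖x - y‖ := by
        rw [hermPart_sub]
        exact norm_hermPart_le _
      have h3 : (Real.toNNReal ((d:ℝ)*(d:ℝ)) : ℝ) = (d:ℝ)*(d:ℝ) := by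
        rw [Real.coe_toNNReal _ (by positivity)]
      rw [h3, hgdef]
      simp only []
      calc |vv U ρ (hermPart x) - vv U ρ (hermPart y)|
          ≤ ((d:ℝ)*(d:ℝ)) * ‖hermPart x - hermPart y‖ := h1
        _ ≤ ((d:ℝ)*(d:ℝ)) * ‖x - y‖ :=
            mul_le_mul_of_nonneg_left h2 (by positivity)
    exact hlip.continuous
  -- convexity of g
  have hgconvex : ∀ x y : Matrix (Fin d) (Fin d) ℂ, ∀ θ η : ℝ, 0 ≤ θ → 0 ≤ η → θ + η = 1 →
      g (θ • x + η • y) ≤ θ * g x + η * g y := by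
    intro x y θ η hθ hη hsum
    rw [hgdef]
    simp only []
    rw [hermPart_comb]
    exact vv_convex U hρ (hermPart_herm x) (hermPart_herm y) hθ hη hsum
  -- separation
  set s : Set ((Matrix (Fin d) (Fin d) ℂ) × ℝ) := {q | g q.1 < q.2} with hsdef
  have hsopen : IsOpen s := isOpen_lt (hgcont.comp continuous_fst) continuous_snd
  have hsconv : Convex ℝ s := by
    rintro q1 hq1 q2 hq2 θ η hθ hη hsum
    have hq1' : g q1.1 < q1.2 := hq1
    have hq2' : g q2.1 < q2.2 := hq2
    show g (θ • q1 + η • q2).1 < (θ • q1 + η • q2).2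
    have h1 : (θ • q1 + η • q2).1 = θ • q1.1 + η • q2.1 := rfl
    have h2 : (θ • q1 + η • q2).2 = θ * q1.2 + η * q2.2 := rfl
    rw [h1, h2]
    have hc := hgconvex q1.1 q2.1 θ η hθ hη hsum
    rcases eq_or_lt_of_le hθ with h0 | hpos
    · have hη1 : η = 1 := by linarith
      rw [← h0, hη1] at hc ⊢
      simp only [zero_mul, one_mul, zero_add] at hc ⊢
      linarith
    · have := mul_lt_mul_of_pos_left hq1' hpos
      have := mul_le_mul_of_nonneg_left (le_of_lt hq2') hη
      linarith
  have hdisj : Disjoint s {(((0 : Matrix (Fin d) (Fin d) ℂ)), p)} := by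
    rw [Set.disjoint_singleton_right]
    show ¬ (g ((0 : Matrix (Fin d) (Fin d) ℂ), p).1 < ((0 : Matrix (Fin d) (Fin d) ℂ), p).2)
    simp [hg0]
  obtain ⟨f, u, hfs, hft⟩ :=
    geometric_hahn_banach_open hsconv hsopen (convex_singleton _) hdisj
  set lam := f (((0 : Matrix (Fin d) (Fin d) ℂ)), (1:ℝ)) with hlam
  have hf01 : ∀ a : ℝ, f (((0 : Matrix (Fin d) (Fin d) ℂ)), a) = a * lam := by
    intro a
    have : (((0 : Matrix (Fin d) (Fin d) ℂ)), a)
        = a • (((0 : Matrix (Fin d) (Fin d) ℂ)), (1:ℝ)) := by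
      rw [Prod.smul_mk]
      simp
    rw [this, _root_.map_smul, smul_eq_mul, hlam]
  have hfSa : ∀ (S : Matrix (Fin d) (Fin d) ℂ) (a : ℝ), f (S, a) = f (S, 0) + a * lam := by
    intro S a
    have : (S, a) = ((S, (0:ℝ)) + (((0 : Matrix (Fin d) (Fin d) ℂ)), a)) := by
      rw [Prod.mk_add_mk]
      simp
    rw [this, map_add, hf01]
  have hup : u ≤ p * lam := by
    have := hft _ rfl
    rwa [hf01] at this
  have hlamneg : lam < 0 := by
    have h1 : (((0 : Matrix (Fin d) (Fin d) ℂ)), p+1) ∈ s := by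
      show g ((0 : Matrix (Fin d) (Fin d) ℂ)) < p + 1
      rw [hg0]; linarith
    have h2 := hfs _ h1
    rw [hf01] at h2
    nlinarith
  have hlamne : lam ≠ 0 := ne_of_lt hlamneg
  -- key subgradient inequality
  have hkey : ∀ S : Matrix (Fin d) (Fin d) ℂ, f (S, 0) + g S * lam ≤ p * lam := by
    intro S
    refine le_of_forall_pos_le_add fun ε hε => ?_
    have hεl : 0 < ε / (-lam) := by
      apply div_pos hε; linarith
    have hmem : (S, g S + ε/(-lam)) ∈ s := by
      show g S < g S + ε/(-lam)
      linarith
    have h6 := hfs _ hmem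
    rw [hfSa] at h6
    have h7 : (ε/(-lam)) * lam = -ε := by
      field_simp
    nlinarith [hup]
  -- representation of the functional
  obtain ⟨B, hB⟩ := exists_matrix_repr f
  have hyherm : (hermPart B).IsHermitian := hermPart_herm B
  set c : ℝ := (-lam)⁻¹ with hc
  have hcpos : 0 < c := by rw [hc]; apply inv_pos.mpr; linarith
  have hlc : lam * c = -1 := by
    rw [hc]
    field_simp
  set X := c • hermPart B with hX
  have hXherm : X.IsHermitian := by
    unfold Matrix.IsHermitian
    rw [hX, conjTranspose_rsmul, hyherm.eq]
  have hpair : ∀ S : Matrix (Fin d) (Fin d) ℂ, S.IsHermitian →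
      ((X * S).trace).re = f (S, 0) * c := by
    intro S hS
    rw [hX, Matrix.smul_mul, Matrix.trace_smul, Complex.smul_re]
    rw [herm_pairing_re B hS, ← hB S]
    simp [mul_comm]
  -- subgradient in matrix form
  have hsub : ∀ S : Matrix (Fin d) (Fin d) ℂ, S.IsHermitian →
      p + ((X * S).trace).re ≤ vv U ρ S := by
    intro S hS
    have h9 := hkey S
    have hgS : g S = vv U ρ S := by rw [hgdef]; simp only []; rw [hermPart_of_herm hS]
    rw [hgS] at h9
    rw [hpair S hS]
    have h10 : f (S,0) * c ≤ ((p - vv U ρ S) * lam) * c := by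
      apply mul_le_mul_of_nonneg_right _ (le_of_lt hcpos)
      nlinarith
    have h11 : ((p - vv U ρ S) * lam) * c = vv U ρ S - p := by
      rw [mul_assoc, hlc]; ring
    linarith [h10, h11.le, h11.ge]
  -- vv(-Q) ≤ p for PSD Q
  have hvvneg : ∀ Q : Matrix (Fin d) (Fin d) ℂ, Q.PosSemidef → vv U ρ (-Q) ≤ p := by
    intro Q hQ
    have h := vv_le_of U hρ (S := 0) (S' := -Q) Matrix.isHermitian_zero
      (a := 1) (b := 0) zero_le_one ?_
    · simpa using h
    · rintro r ⟨τ, hE, hpsd, htr⟩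
      refine ⟨τ, hE, ?_, by simpa using htr⟩
      have hsplit : τ - ρ - (-Q) = (τ - ρ - 0) + Q := by abel
      rw [hsplit]
      exact Matrix.PosSemidef.add hpsd hQ
  -- X is PSD
  have hXpsd : X.PosSemidef := by
    refine psd_of_herm_re hXherm fun x => ?_
    have houter := outer_psd x
    have htr := trace_mul_outer X x
    have h12 : (dotProduct (star x) (X *ᵥ x)).re = ((X * outer x).trace).re := by
      rw [htr]
    rw [h12]
    have h13 := hsub (-(outer x)) houter.1.neg
    have h14 := hvvneg (outer x) houter
    have h15 : ((X * (-(outer x))).trace).re = - ((X * outer x).trace).re := by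
      rw [Matrix.mul_neg, Matrix.trace_neg, Complex.neg_re]
    rw [h15] at h13
    linarith
  -- invariant Hermitian S pairing
  have hWeq : ∀ S : Matrix (Fin d) (Fin d) ℂ, S.IsHermitian → grpAvg U S = S →
      ((X * S).trace).re = S.trace.re := by
    have hub : ∀ S : Matrix (Fin d) (Fin d) ℂ, S.IsHermitian → grpAvg U S = S →
        vv U ρ S ≤ p + S.trace.re := by
      intro S hS hES
      have h := vv_le_of U hρ (S := 0) (S' := S) Matrix.isHermitian_zero
        (a := 1) (b := S.trace.re) zero_le_one ?_
      · simpa using h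
      · rintro r ⟨τ, hE, hpsd, htr⟩
        refine ⟨τ + S, by rw [grpAvg_add, hE, hES], ?_, ?_⟩
        · have hsplit : τ + S - ρ - S = τ - ρ - 0 := by abel
          rw [hsplit]; exact hpsd
        · rw [Matrix.trace_add, Complex.add_re, htr]
          ring
    intro S hS hES
    have h16 := hsub S hS
    have h17 := hub S hS hES
    have hnegE : grpAvg U (-S) = -S := by
      have := grpAvg_sub U 0 S
      rw [grpAvg_zero] at this
      simpa [hES] using this
    have h18 := hsub (-S) hS.neg
    have h19 := hub (-S) hS.neg hnegE
    have h20 : ((X * (-S)).trace).re = - ((X * S).trace).re := by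
      rw [Matrix.mul_neg, Matrix.trace_neg, Complex.neg_re]
    have h21 : (-S).trace.re = - S.trace.re := by
      rw [Matrix.trace_neg, Complex.neg_re]
    rw [h20] at h18
    rw [h21] at h19
    linarith
  -- grpAvg U X = 1
  have hEX : grpAvg U X = 1 := by
    set S0 := grpAvg U X - 1 with hS0
    have hS0herm : S0.IsHermitian := (grpAvg_herm U hXherm).sub Matrix.isHermitian_one
    have hS0E : grpAvg U S0 = S0 := by
      rw [hS0, grpAvg_sub, grpAvg_idem, grpAvg_one]
    have h11 : ((X * S0).trace).re = S0.trace.re := hWeq S0 hS0herm hS0E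
    have h12 : ((grpAvg U X * S0).trace) = ((X * S0).trace) := by
      rw [grpAvg_adjoint, hS0E]
    have h13 : ((S0 * S0).trace).re = 0 := by
      have hsplit : S0 * S0 = grpAvg U X * S0 - 1 * S0 := by
        rw [hS0, Matrix.sub_mul]
      rw [hsplit, Matrix.trace_sub, Complex.sub_re, h12, h11, Matrix.one_mul]
      ring
    have h14 := eq_zero_of_trace_sq_herm hS0herm h13
    rw [hS0] at h14
    exact sub_eq_zero.mp h14
  -- value
  have hv2p : vv U ρ ρ ≤ 2 * p := by
    have h := vv_le_of U hρ (S := 0) (S' := ρ) Matrix.isHermitian_zero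
      (a := 2) (b := 0) (by norm_num) ?_
    · simpa using h
    · rintro r ⟨τ, hE, hpsd, htr⟩
      refine ⟨(2:ℝ) • τ, by rw [grpAvg_rsmul, hE], ?_, ?_⟩
      · have hsplit : (2:ℝ) • τ - ρ - ρ = (2:ℝ) • (τ - ρ - 0) := by
          rw [sub_zero, smul_sub, two_smul, two_smul]
          abel
        rw [hsplit]
        exact psd_smul_real hpsd (by norm_num)
      · rw [Matrix.trace_smul, Complex.smul_re, htr]
        simp [smul_eq_mul]
  have hvnegρ : vv U ρ (-ρ) ≤ 0 := by
    refine csInf_le (feas_bdd U hρ _) ⟨0, grpAvg_zero U, ?_, by simp⟩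
    have h : (0 : Matrix (Fin d) (Fin d) ℂ) - ρ - (-ρ) = 0 := by abel
    rw [h]
    exact Matrix.PosSemidef.zero
  have h14 := hsub ρ hρherm
  have h15 := hsub (-ρ) hρherm.neg
  have h16 : ((X * (-ρ)).trace).re = - ((X * ρ).trace).re := by
    rw [Matrix.mul_neg, Matrix.trace_neg, Complex.neg_re]
  rw [h16] at h15
  have hple : ((X * ρ).trace).re = p := by linarith
  refine ⟨X, hXpsd, hEX, ?_⟩
  rw [hple, hp, vv_zero_eq U hρ]

end MainTheorem
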